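/- Define V(x₁,x₂) = (x₁ + x₂)² + x₂⁴/2 on ℝ². Then V(0,0) = 0, V > 0 away from the origin, V is radially unbounded, and along solutions of ẋ₁ = x₂³, ẋ₂ = -x₁ - x₂ - x₂³, one has V_{x₁}·x₂³ + V_{x₂}·(-x₁ - x₂ - x₂³) = -(x₁+x₂)² - x₂⁶ - (x₁ + x₂ + x₂³)², which is strictly negative for all (x₁,x₂) ≠ (0,0). -/

import Mathlib

/-- Cubic example: `V = (x₁+x₂)² + x₂⁴/2` vanishes at the origin, is positive away
from it, is radially unbounded, and along `ẋ₁ = x₂³, ẋ₂ = -x₁ - x₂ - x₂³` one has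
`V̇ = -(x₁+x₂)² - x₂⁶ - (x₁+x₂+x₂³)²`, strictly negative off the origin. -/
theorem stmt_6 (V : ℝ → ℝ → ℝ)
    (hV : ∀ x₁ x₂, V x₁ x₂ = (x₁ + x₂) ^ 2 + x₂ ^ 4 / 2) :
    V 0 0 = 0 ∧
    (∀ x₁ x₂ : ℝ, (x₁, x₂) ≠ (0, 0) → 0 < V x₁ x₂) ∧
    Filter.Tendsto (fun p : ℝ × ℝ => V p.1 p.2) (Filter.cocompact (ℝ × ℝ))
      Filter.atTop ∧
    (∀ x₁ x₂ : ℝ,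
      deriv (fun y => V y x₂) x₁ * (x₂ ^ 3)
        + deriv (fun y => V x₁ y) x₂ * (-x₁ - x₂ - x₂ ^ 3)
        = -(x₁ + x₂) ^ 2 - x₂ ^ 6 - (x₁ + x₂ + x₂ ^ 3) ^ 2 ∧
      ((x₁, x₂) ≠ (0, 0) →
        -(x₁ + x₂) ^ 2 - x₂ ^ 6 - (x₁ + x₂ + x₂ ^ 3) ^ 2 < 0)) := by
  refine ⟨by simp [hV], ?_, ?_, ?_⟩
  · intro x₁ x₂ h
    rw [hV]
    rcases eq_or_ne x₂ 0 with h2 | h2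
    · subst h2
      have h1 : x₁ ≠ 0 := by simpa using h
      have : 0 < x₁ ^ 2 := by positivity
      nlinarith
    · have : 0 < x₂ ^ 4 := by positivity
      nlinarith [sq_nonneg (x₁ + x₂)]
  · have key : Filter.Tendsto (fun p : ℝ × ℝ => ‖p‖ ^ 2 / 4 - 1 / 2)
        (Filter.cocompact (ℝ × ℝ)) Filter.atTop := by
      have h1 : Filter.Tendsto (fun r : ℝ => r ^ 2 / 4 - 1 / 2)
          Filter.atTop Filter.atTop := by
        apply Filter.Tendsto.atTop_add _ tendsto_const_nhds
        apply Filter.Tendsto.atTop_div_const (by norm_num)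
        exact Filter.tendsto_pow_atTop (by norm_num)
      exact h1.comp tendsto_norm_cocompact_atTop
    apply Filter.tendsto_atTop_mono _ key
    intro p
    rw [hV]
    have hn : ‖p‖ ^ 2 ≤ p.1 ^ 2 + p.2 ^ 2 := by
      have h1 : |p.1| ^ 2 = p.1 ^ 2 := sq_abs _
      have h2 : |p.2| ^ 2 = p.2 ^ 2 := sq_abs _
      have : ‖p‖ = max ‖p.1‖ ‖p.2‖ := rfl
      rw [this]
      rcases max_cases ‖p.1‖ ‖p.2‖ with ⟨he, _⟩ | ⟨he, _⟩ <;>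
        rw [he] <;> simp only [Real.norm_eq_abs] <;>
        nlinarith [sq_abs p.1, sq_abs p.2, sq_nonneg p.1, sq_nonneg p.2]
    nlinarith [sq_nonneg (p.1 + 2 * p.2), sq_nonneg (p.2 ^ 2 - 1), sq_nonneg p.2]
  · intro x₁ x₂
    constructor
    · have d1 : deriv (fun y => V y x₂) x₁ = 2 * (x₁ + x₂) := by
        have : (fun y => V y x₂) = fun y => (y + x₂) ^ 2 + x₂ ^ 4 / 2 := by
          funext y; exact hV y x₂
        rw [this]
        have h : HasDerivAt (fun y : ℝ => (y + x₂) ^ 2 + x₂ ^ 4 / 2)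
            (2 * (x₁ + x₂)) x₁ := by
          have := (((hasDerivAt_id x₁).add_const x₂).pow 2).add_const (x₂ ^ 4 / 2)
          simpa using this.congr_deriv (by simp only [id_eq]; ring)
        exact h.deriv
      have d2 : deriv (fun y => V x₁ y) x₂ = 2 * (x₁ + x₂) + 2 * x₂ ^ 3 := by
        have : (fun y => V x₁ y) = fun y => (x₁ + y) ^ 2 + y ^ 4 / 2 := by
          funext y; exact hV x₁ y
        rw [this]
        have h : HasDerivAt (fun y : ℝ => (x₁ + y) ^ 2 + y ^ 4 / 2)
            (2 * (x₁ + x₂) + 2 * x₂ ^ 3) x₂ := by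
          have h1 := ((hasDerivAt_id x₂).const_add x₁).pow 2
          have h2 := ((hasDerivAt_id x₂).pow 4).div_const 2
          simpa [Pi.add_def, Pi.pow_def] using (h1.add h2).congr_deriv (by simp only [id_eq]; ring)
        exact h.deriv
      rw [d1, d2]; ring
    · intro h
      rcases eq_or_ne x₂ 0 with h2 | h2
      · subst h2
        have h1 : x₁ ≠ 0 := by simpa using h
        have : 0 < x₁ ^ 2 := by positivity
        nlinarith
      · have : 0 < x₂ ^ 6 := by positivity
        nlinarith [sq_nonneg (x₁ + x₂), sq_nonneg (x₁ + x₂ + x₂ ^ 3)]
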